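/- Let p_i ∈ M_{d_i}(ℂ) be a sequence of matrices such that ‖p_i² − p_i‖₂ → 0 and ‖p_i* − p_i‖₂ → 0 (with respect to the normalized Hilbert–Schmidt norm), and sup_i ‖p_i‖_∞ < ∞. Then there exist orthogonal projections q_i ∈ M_{d_i}(ℂ) with ‖p_i − q_i‖₂ → 0. Moreover if each p_i has real entries, the q_i may be chosen with real entries. -/

import Mathlib

open Filter Topology Matrix

/-- The normalized Hilbert–Schmidt norm `‖M‖₂ = (tr(M*M))^{1/2}` on `M_d(ℂ)`. -/
noncomputable def matNorm2 {d : ℕ} (M : Matrix (Fin d) (Fin d) ℂ) : ℝ :=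
  Real.sqrt (((d : ℂ)⁻¹ * (Mᴴ * M).trace).re)

/-- The operator norm of a matrix, acting on Euclidean space. -/
noncomputable def matOpNorm {d : ℕ} (M : Matrix (Fin d) (Fin d) ℂ) : ℝ :=
  ‖Matrix.toEuclideanCLM (𝕜 := ℂ) M‖

set_option synthInstance.maxHeartbeats 1000000
set_option maxHeartbeats 1000000

namespace Proj

variable {d : ℕ}

noncomputable def sq2 (M : Matrix (Fin d) (Fin d) ℂ) : ℝ :=
  (d : ℝ)⁻¹ * ∑ j, ∑ k, ‖M j k‖ ^ 2

lemma sq2_nonneg (M : Matrix (Fin d) (Fin d) ℂ) : 0 ≤ sq2 M := by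
  apply mul_nonneg (by positivity)
  exact Finset.sum_nonneg fun j _ => Finset.sum_nonneg fun k _ => by positivity

lemma matNorm2_eq (M : Matrix (Fin d) (Fin d) ℂ) : matNorm2 M = Real.sqrt (sq2 M) := by
  have h : (Mᴴ * M).trace = ((∑ j, ∑ k, ‖M j k‖ ^ 2 : ℝ) : ℂ) := by
    simp only [Matrix.trace, Matrix.diag, Matrix.mul_apply, Matrix.conjTranspose_apply]
    rw [Finset.sum_comm]
    push_cast
    congr 1; ext j; congr 1; ext k
    rw [Complex.star_def, ← Complex.normSq_eq_conj_mul_self]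
    rw [Complex.normSq_eq_norm_sq]
    norm_cast
  rw [matNorm2, h, sq2]
  congr 1
  have : ((d : ℂ))⁻¹ = ((d : ℝ) : ℂ)⁻¹ := by push_cast; ring
  rw [this, ← Complex.ofReal_inv, ← Complex.ofReal_mul, Complex.ofReal_re]

section Frob
attribute [local instance] Matrix.frobeniusSeminormedAddCommGroup Matrix.frobeniusNormedSpace

lemma sqrt_sq2 (M : Matrix (Fin d) (Fin d) ℂ) :
    Real.sqrt (sq2 M) = (Real.sqrt d)⁻¹ * ‖M‖ := by
  rw [sq2, Real.sqrt_mul (by positivity), Real.sqrt_inv, Matrix.frobenius_norm_def]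
  rw [Real.sqrt_eq_rpow (∑ j, ∑ k, ‖M j k‖ ^ 2)]
  norm_num

lemma matNorm2_frob (M : Matrix (Fin d) (Fin d) ℂ) : matNorm2 M = (Real.sqrt d)⁻¹ * ‖M‖ := by
  rw [matNorm2_eq, sqrt_sq2]

lemma matNorm2_nonneg (M : Matrix (Fin d) (Fin d) ℂ) : 0 ≤ matNorm2 M := by
  rw [matNorm2_eq]; positivity

lemma matNorm2_add_le (A B : Matrix (Fin d) (Fin d) ℂ) :
    matNorm2 (A + B) ≤ matNorm2 A + matNorm2 B := by
  simp only [matNorm2_frob, ← mul_add]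
  exact mul_le_mul_of_nonneg_left (norm_add_le A B) (by positivity)

lemma matNorm2_neg (A : Matrix (Fin d) (Fin d) ℂ) : matNorm2 (-A) = matNorm2 A := by
  simp [matNorm2_frob]

lemma matNorm2_smul (c : ℂ) (A : Matrix (Fin d) (Fin d) ℂ) :
    matNorm2 (c • A) = ‖c‖ * matNorm2 A := by
  simp only [matNorm2_frob, norm_smul]; ring

end Frob

lemma matNorm2_conjTranspose (A : Matrix (Fin d) (Fin d) ℂ) : matNorm2 Aᴴ = matNorm2 A := by
  rw [matNorm2_eq, matNorm2_eq]
  congr 1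
  rw [sq2, sq2, Finset.sum_comm]
  simp [Matrix.conjTranspose_apply]

lemma matOpNorm_nonneg (A : Matrix (Fin d) (Fin d) ℂ) : 0 ≤ matOpNorm A := norm_nonneg _

lemma matOpNorm_conjTranspose (A : Matrix (Fin d) (Fin d) ℂ) : matOpNorm Aᴴ = matOpNorm A := by
  rw [matOpNorm, matOpNorm, ← Matrix.star_eq_conjTranspose, map_star]
  rw [ContinuousLinearMap.star_eq_adjoint]
  exact LinearIsometryEquiv.norm_map ContinuousLinearMap.adjoint _

lemma matOpNorm_smul (c : ℂ) (A : Matrix (Fin d) (Fin d) ℂ) :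
    matOpNorm (c • A) = ‖c‖ * matOpNorm A := by
  rw [matOpNorm, matOpNorm, _root_.map_smul]
  exact norm_smul c (Matrix.toEuclideanCLM (𝕜 := ℂ) A)

lemma matOpNorm_add_le (A B : Matrix (Fin d) (Fin d) ℂ) :
    matOpNorm (A + B) ≤ matOpNorm A + matOpNorm B := by
  rw [matOpNorm, matOpNorm, matOpNorm, map_add]; exact norm_add_le _ _

lemma sq2_mul_le (A B : Matrix (Fin d) (Fin d) ℂ) :
    sq2 (A * B) ≤ matOpNorm A ^ 2 * sq2 B := by
  have hAB : sq2 (A * B) = (d : ℝ)⁻¹ * ∑ k, ∑ j, ‖(A * B) j k‖ ^ 2 := by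
    rw [sq2, Finset.sum_comm]
  have hB : sq2 B = (d : ℝ)⁻¹ * ∑ k, ∑ j, ‖B j k‖ ^ 2 := by
    rw [sq2, Finset.sum_comm]
  rw [hAB, hB]
  have hsum : ∑ k, ∑ j, ‖(A * B) j k‖ ^ 2 ≤ matOpNorm A ^ 2 * ∑ k, ∑ j, ‖B j k‖ ^ 2 := by
    rw [Finset.mul_sum]
    apply Finset.sum_le_sum
    intro k _
    have key : ∀ (v : Fin d → ℂ), ∑ j, ‖Matrix.mulVec A v j‖ ^ 2 ≤ matOpNorm A ^ 2 * ∑ j, ‖v j‖ ^ 2 := by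
      intro v
      have h1 : ‖Matrix.toEuclideanCLM (𝕜 := ℂ) A ((WithLp.equiv 2 _).symm v)‖
          ≤ matOpNorm A * ‖(WithLp.equiv 2 (Fin d → ℂ)).symm v‖ :=
        (Matrix.toEuclideanCLM (𝕜 := ℂ) A).le_opNorm _
      have h2 : ∀ (w : Fin d → ℂ), ‖(WithLp.equiv 2 (Fin d → ℂ)).symm w‖ ^ 2 = ∑ j, ‖w j‖ ^ 2 := by
        intro w
        rw [EuclideanSpace.norm_eq]
        rw [Real.sq_sqrt (Finset.sum_nonneg fun j _ => by positivity)]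
        rfl
      have h3 : Matrix.toEuclideanCLM (𝕜 := ℂ) A ((WithLp.equiv 2 _).symm v)
          = (WithLp.equiv 2 (Fin d → ℂ)).symm (Matrix.mulVec A v) := by
        exact Matrix.toEuclideanCLM_toLp A v
      calc ∑ j, ‖Matrix.mulVec A v j‖ ^ 2
          = ‖(WithLp.equiv 2 (Fin d → ℂ)).symm (Matrix.mulVec A v)‖ ^ 2 := (h2 _).symm
        _ = ‖Matrix.toEuclideanCLM (𝕜 := ℂ) A ((WithLp.equiv 2 _).symm v)‖ ^ 2 := by rw [h3]
        _ ≤ (matOpNorm A * ‖(WithLp.equiv 2 (Fin d → ℂ)).symm v‖) ^ 2 := by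
            apply pow_le_pow_left₀ (norm_nonneg _) h1
        _ = matOpNorm A ^ 2 * ∑ j, ‖v j‖ ^ 2 := by rw [mul_pow, h2]
    have := key (fun j => B j k)
    simpa [Matrix.mulVec, Matrix.mul_apply, dotProduct] using this
  calc (d : ℝ)⁻¹ * ∑ k, ∑ j, ‖(A * B) j k‖ ^ 2
      ≤ (d : ℝ)⁻¹ * (matOpNorm A ^ 2 * ∑ k, ∑ j, ‖B j k‖ ^ 2) :=
        mul_le_mul_of_nonneg_left hsum (by positivity)
    _ = matOpNorm A ^ 2 * ((d : ℝ)⁻¹ * ∑ k, ∑ j, ‖B j k‖ ^ 2) := by ring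

lemma matNorm2_mul_le (A B : Matrix (Fin d) (Fin d) ℂ) :
    matNorm2 (A * B) ≤ matOpNorm A * matNorm2 B := by
  rw [matNorm2_eq, matNorm2_eq]
  calc Real.sqrt (sq2 (A * B)) ≤ Real.sqrt (matOpNorm A ^ 2 * sq2 B) :=
        Real.sqrt_le_sqrt (sq2_mul_le A B)
    _ = matOpNorm A * Real.sqrt (sq2 B) := by
        rw [Real.sqrt_mul (by positivity), Real.sqrt_sq (matOpNorm_nonneg A)]

lemma matNorm2_mul_le_right (A B : Matrix (Fin d) (Fin d) ℂ) :
    matNorm2 (A * B) ≤ matNorm2 A * matOpNorm B := by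
  calc matNorm2 (A * B) = matNorm2 (A * B)ᴴ := (matNorm2_conjTranspose _).symm
    _ = matNorm2 (Bᴴ * Aᴴ) := by rw [Matrix.conjTranspose_mul]
    _ ≤ matOpNorm Bᴴ * matNorm2 Aᴴ := matNorm2_mul_le _ _
    _ = matNorm2 A * matOpNorm B := by
        rw [matOpNorm_conjTranspose, matNorm2_conjTranspose]; ring

lemma matNorm2_unitary_conj (U : Matrix.unitaryGroup (Fin d) ℂ) (X : Matrix (Fin d) (Fin d) ℂ) :
    matNorm2 ((U : Matrix (Fin d) (Fin d) ℂ) * X * star (U : Matrix (Fin d) (Fin d) ℂ)) =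
      matNorm2 X := by
  set V : Matrix (Fin d) (Fin d) ℂ := (U : Matrix (Fin d) (Fin d) ℂ) with hV
  have h2 : star V * V = 1 := Matrix.mem_unitaryGroup_iff'.mp U.2
  rw [matNorm2, matNorm2]
  congr 3
  have hYH : (V * X * star V)ᴴ = V * Xᴴ * star V := by
    simp only [Matrix.star_eq_conjTranspose, Matrix.conjTranspose_mul,
      Matrix.conjTranspose_conjTranspose, mul_assoc]
  rw [hYH]
  have key : (V * Xᴴ * star V) * (V * X * star V) = V * (Xᴴ * X) * star V := by
    rw [mul_assoc (V * Xᴴ), ← mul_assoc (star V) (V * X), ← mul_assoc (star V) V, h2, one_mul]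
    simp only [mul_assoc]
  rw [key, Matrix.trace_mul_cycle, ← mul_assoc, h2, one_mul]

lemma matNorm2_diagonal (v : Fin d → ℝ) :
    matNorm2 (Matrix.diagonal (fun j => (v j : ℂ))) = Real.sqrt ((d : ℝ)⁻¹ * ∑ j, (v j) ^ 2) := by
  rw [matNorm2_eq, sq2]
  congr 2
  apply Finset.sum_congr rfl
  intro j _
  rw [Finset.sum_eq_single j]
  · simp [Matrix.diagonal_apply_eq, Complex.norm_real, sq_abs]
  · intro k _ hk
    simp [Matrix.diagonal_apply_ne _ (Ne.symm hk)]
  · simp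

noncomputable def conjAlgHom (U : Matrix.unitaryGroup (Fin d) ℂ) :
    Matrix (Fin d) (Fin d) ℂ →ₐ[ℂ] Matrix (Fin d) (Fin d) ℂ where
  toFun X := (U : Matrix (Fin d) (Fin d) ℂ) * X * star (U : Matrix (Fin d) (Fin d) ℂ)
  map_one' := by
    show (U : Matrix (Fin d) (Fin d) ℂ) * 1 * star (U : Matrix (Fin d) (Fin d) ℂ) = 1
    rw [mul_one]; exact Matrix.mem_unitaryGroup_iff.mp U.2
  map_mul' X Y := by
    have h2 : star (U : Matrix (Fin d) (Fin d) ℂ) * (U : Matrix (Fin d) (Fin d) ℂ) = 1 :=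
      Matrix.mem_unitaryGroup_iff'.mp U.2
    set V : Matrix (Fin d) (Fin d) ℂ := (U : Matrix (Fin d) (Fin d) ℂ)
    rw [mul_assoc (V * X), ← mul_assoc (star V) (V * Y), ← mul_assoc (star V) V, h2, one_mul]
    simp only [mul_assoc]
  map_zero' := by simp
  map_add' X Y := by simp [mul_add, add_mul]
  commutes' c := by
    simp only [Algebra.algebraMap_eq_smul_one, Matrix.smul_mul, Matrix.mul_smul, mul_one]
    rw [Matrix.mem_unitaryGroup_iff.mp U.2]

lemma aeval_unitary_conj (U : Matrix.unitaryGroup (Fin d) ℂ) (X : Matrix (Fin d) (Fin d) ℂ)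
    (P : Polynomial ℂ) :
    Polynomial.aeval ((U : Matrix (Fin d) (Fin d) ℂ) * X * star (U : Matrix (Fin d) (Fin d) ℂ)) P
      = (U : Matrix (Fin d) (Fin d) ℂ) * Polynomial.aeval X P
          * star (U : Matrix (Fin d) (Fin d) ℂ) :=
  Polynomial.aeval_algHom_apply (conjAlgHom U) X P

lemma aeval_diagonal (v : Fin d → ℂ) (P : Polynomial ℂ) :
    Polynomial.aeval (Matrix.diagonal v) P
      = Matrix.diagonal (fun j => Polynomial.aeval (v j) P) := by
  have h1 : Matrix.diagonal v = Matrix.diagonalAlgHom (n := Fin d) ℂ v := rfl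
  rw [h1, Polynomial.aeval_algHom_apply]
  show Matrix.diagonal (Polynomial.aeval v P) = _
  exact congrArg Matrix.diagonal (funext fun j =>
    (Polynomial.aeval_algHom_apply (Pi.evalAlgHom ℂ (fun _ : Fin d => ℂ) j) v P).symm)

noncomputable def chi (x : ℝ) : ℝ := if (1:ℝ)/2 ≤ x then 1 else 0

lemma chi_sq_bound (x : ℝ) : (x - chi x) ^ 2 ≤ 4 * (x ^ 2 - x) ^ 2 := by
  unfold chi
  split_ifs with h
  · have h' : (0:ℝ) ≤ 4 * x ^ 2 - 1 := by nlinarith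
    nlinarith [mul_nonneg (sq_nonneg (x - 1)) h']
  · push_neg at h
    have h' : (0:ℝ) ≤ 4 * (x - 1) ^ 2 - 1 := by nlinarith
    nlinarith [mul_nonneg (sq_nonneg x) h']

lemma herm_conj {V : Matrix.unitaryGroup (Fin d) ℂ} {D : Matrix (Fin d) (Fin d) ℂ}
    (hD : Dᴴ = D) :
    ((V : Matrix (Fin d) (Fin d) ℂ) * D * star (V : Matrix (Fin d) (Fin d) ℂ))ᴴ
      = (V : Matrix (Fin d) (Fin d) ℂ) * D * star (V : Matrix (Fin d) (Fin d) ℂ) := by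
  simp only [Matrix.star_eq_conjTranspose, Matrix.conjTranspose_mul,
    Matrix.conjTranspose_conjTranspose, hD, mul_assoc]

lemma conj_mul_conj (V : Matrix.unitaryGroup (Fin d) ℂ) (X Y : Matrix (Fin d) (Fin d) ℂ) :
    ((V : Matrix (Fin d) (Fin d) ℂ) * X * star (V : Matrix (Fin d) (Fin d) ℂ)) *
      ((V : Matrix (Fin d) (Fin d) ℂ) * Y * star (V : Matrix (Fin d) (Fin d) ℂ))
    = (V : Matrix (Fin d) (Fin d) ℂ) * (X * Y) * star (V : Matrix (Fin d) (Fin d) ℂ) :=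
  (map_mul (conjAlgHom V) X Y).symm

lemma key (p : Matrix (Fin d) (Fin d) ℂ) :
    ∃ q : Matrix (Fin d) (Fin d) ℂ, qᴴ = q ∧ q * q = q ∧
      ((∀ j k, (p j k).im = 0) → ∀ j k, (q j k).im = 0) ∧
      matNorm2 (p - q) ≤ 2 * matNorm2 (p * p - p)
        + (3 / 2 + 2 * matOpNorm p) * matNorm2 (pᴴ - p) := by
  classical
  set a : Matrix (Fin d) (Fin d) ℂ := (2⁻¹ : ℂ) • (p + pᴴ) with ha_def
  have ha : a.IsHermitian := by
    show aᴴ = a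
    rw [ha_def, Matrix.conjTranspose_smul, Matrix.conjTranspose_add,
      Matrix.conjTranspose_conjTranspose]
    rw [show star (2⁻¹ : ℂ) = (2⁻¹ : ℂ) by simp]
    rw [add_comm]
  set U := ha.eigenvectorUnitary with hU_def
  set ev := ha.eigenvalues with hev_def
  set V : Matrix (Fin d) (Fin d) ℂ := (U : Matrix (Fin d) (Fin d) ℂ) with hV_def
  set D : Matrix (Fin d) (Fin d) ℂ := Matrix.diagonal (fun j => ((ev j : ℝ) : ℂ)) with hD_def
  set E : Matrix (Fin d) (Fin d) ℂ := Matrix.diagonal (fun j => ((chi (ev j) : ℝ) : ℂ)) with hE_def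
  have hspec : a = V * D * star V := by
    have := ha.spectral_theorem
    rw [Unitary.conjStarAlgAut_apply] at this
    exact this
  set q : Matrix (Fin d) (Fin d) ℂ := V * E * star V with hq_def
  have hEherm : Eᴴ = E := by
    rw [hE_def, Matrix.diagonal_conjTranspose]
    exact congrArg Matrix.diagonal (funext fun j => by
      simp only [Pi.star_apply, Complex.star_def, Complex.conj_ofReal])
  have hqherm : qᴴ = q := herm_conj hEherm
  have hEE : E * E = E := by
    rw [hE_def, Matrix.diagonal_mul_diagonal]
    refine congrArg Matrix.diagonal (funext fun j => ?_)
    rw [← Complex.ofReal_mul]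
    norm_cast
    unfold chi
    split_ifs <;> norm_num
  have hqidem : q * q = q := by rw [hq_def, conj_mul_conj, hEE]
  have hbound : matNorm2 (p - q) ≤ 2 * matNorm2 (p * p - p)
      + (3 / 2 + 2 * matOpNorm p) * matNorm2 (pᴴ - p) := by
    have hap : a - p = (2⁻¹ : ℂ) • (pᴴ - p) := by
      rw [ha_def]
      module
    have h_ap_norm : matNorm2 (a - p) = 2⁻¹ * matNorm2 (pᴴ - p) := by
      rw [hap, matNorm2_smul]
      norm_num
    have h_pa_norm : matNorm2 (p - a) = 2⁻¹ * matNorm2 (pᴴ - p) := by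
      rw [show p - a = -(a - p) by abel, matNorm2_neg, h_ap_norm]
    have hopa : matOpNorm a ≤ matOpNorm p := by
      calc matOpNorm a = ‖(2⁻¹ : ℂ)‖ * matOpNorm (p + pᴴ) := matOpNorm_smul _ _
        _ ≤ 2⁻¹ * (matOpNorm p + matOpNorm pᴴ) := by
            rw [show ‖(2⁻¹ : ℂ)‖ = 2⁻¹ by norm_num]
            exact mul_le_mul_of_nonneg_left (matOpNorm_add_le p pᴴ) (by norm_num)
        _ = matOpNorm p := by rw [matOpNorm_conjTranspose]; ring
    have hid : a * a - a = a * (a - p) + (a - p) * p + (p * p - p) + (p - a) := by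
      noncomm_ring
    have h1 : matNorm2 (a * a - a)
        ≤ matOpNorm p * matNorm2 (pᴴ - p) + matNorm2 (p * p - p)
          + 2⁻¹ * matNorm2 (pᴴ - p) := by
      have t0 : matNorm2 (a * (a - p) + (a - p) * p + (p * p - p) + (p - a))
          ≤ matNorm2 (a * (a - p)) + matNorm2 ((a - p) * p) + matNorm2 (p * p - p)
            + matNorm2 (p - a) := by
        have s1 := matNorm2_add_le (a * (a - p)) ((a - p) * p)
        have s2 := matNorm2_add_le (a * (a - p) + (a - p) * p) (p * p - p)
        have s3 := matNorm2_add_le (a * (a - p) + (a - p) * p + (p * p - p)) (p - a)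
        linarith
      have t1 := matNorm2_mul_le a (a - p)
      have t2 := matNorm2_mul_le_right (a - p) p
      have t3 := mul_le_mul_of_nonneg_right hopa (matNorm2_nonneg (a - p))
      rw [hid]
      rw [h_ap_norm] at t1 t2
      rw [h_ap_norm] at t3
      nlinarith [matNorm2_nonneg (pᴴ - p), matOpNorm_nonneg p, t0, t1, t2, t3,
        h_pa_norm]
    have haq : a - q = V * (D - E) * star V := by
      rw [mul_sub, sub_mul, ← hspec, ← hq_def]
    have haa : a * a - a = V * (D * D - D) * star V := by
      have hsq : a * a = V * (D * D) * star V := by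
        rw [hspec]; exact conj_mul_conj U D D
      rw [mul_sub, sub_mul, ← hsq, ← hspec]
    have hDE : D - E = Matrix.diagonal (fun j => ((ev j - chi (ev j) : ℝ) : ℂ)) := by
      rw [hD_def, hE_def, Matrix.diagonal_sub]
      exact congrArg Matrix.diagonal (funext fun j => by push_cast; ring)
    have hDD : D * D - D = Matrix.diagonal (fun j => ((ev j ^ 2 - ev j : ℝ) : ℂ)) := by
      rw [hD_def, Matrix.diagonal_mul_diagonal, Matrix.diagonal_sub]
      exact congrArg Matrix.diagonal (funext fun j => by push_cast; ring)
    have naq : matNorm2 (a - q)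
        = Real.sqrt ((d : ℝ)⁻¹ * ∑ j, (ev j - chi (ev j)) ^ 2) := by
      rw [haq, hV_def, matNorm2_unitary_conj, hDE, matNorm2_diagonal]
    have naa : matNorm2 (a * a - a)
        = Real.sqrt ((d : ℝ)⁻¹ * ∑ j, (ev j ^ 2 - ev j) ^ 2) := by
      rw [haa, hV_def, matNorm2_unitary_conj, hDD, matNorm2_diagonal]
    have hcomp : matNorm2 (a - q) ≤ 2 * matNorm2 (a * a - a) := by
      rw [naq, naa]
      have hsum : (d : ℝ)⁻¹ * ∑ j, (ev j - chi (ev j)) ^ 2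
          ≤ 4 * ((d : ℝ)⁻¹ * ∑ j, (ev j ^ 2 - ev j) ^ 2) := by
        rw [← mul_assoc, mul_comm (4:ℝ), mul_assoc]
        apply mul_le_mul_of_nonneg_left _ (by positivity)
        rw [Finset.mul_sum]
        exact Finset.sum_le_sum fun j _ => chi_sq_bound (ev j)
      calc Real.sqrt ((d : ℝ)⁻¹ * ∑ j, (ev j - chi (ev j)) ^ 2)
          ≤ Real.sqrt (4 * ((d : ℝ)⁻¹ * ∑ j, (ev j ^ 2 - ev j) ^ 2)) :=
            Real.sqrt_le_sqrt hsum
        _ = 2 * Real.sqrt ((d : ℝ)⁻¹ * ∑ j, (ev j ^ 2 - ev j) ^ 2) := by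
            rw [show (4:ℝ) = 2 ^ 2 by norm_num, Real.sqrt_mul (by positivity),
              Real.sqrt_sq (by norm_num : (0:ℝ) ≤ 2)]
    calc matNorm2 (p - q) = matNorm2 ((p - a) + (a - q)) := by rw [sub_add_sub_cancel]
      _ ≤ matNorm2 (p - a) + matNorm2 (a - q) := matNorm2_add_le _ _
      _ ≤ 2⁻¹ * matNorm2 (pᴴ - p)
            + 2 * (matOpNorm p * matNorm2 (pᴴ - p) + matNorm2 (p * p - p)
                + 2⁻¹ * matNorm2 (pᴴ - p)) := by
          rw [h_pa_norm]
          have h2 : matNorm2 (a - q) ≤ 2 * (matOpNorm p * matNorm2 (pᴴ - p)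
              + matNorm2 (p * p - p) + 2⁻¹ * matNorm2 (pᴴ - p)) := by
            refine hcomp.trans ?_
            linarith
          linarith
      _ = 2 * matNorm2 (p * p - p) + (3 / 2 + 2 * matOpNorm p) * matNorm2 (pᴴ - p) := by
          ring
  refine ⟨q, hqherm, hqidem, ?_, hbound⟩
  intro hpre
  have hamap : a.map (starRingEnd ℂ) = a := by
    ext j k
    rw [Matrix.map_apply]
    have hjk : (a j k).im = 0 := by
      rw [ha_def]
      simp only [Matrix.smul_apply, Matrix.add_apply, Matrix.conjTranspose_apply,
        smul_eq_mul, Complex.mul_im, Complex.add_im, Complex.add_re]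
      rw [Complex.star_def]
      simp [Complex.conj_im, Complex.conj_re, hpre j k, hpre k j]
    exact Complex.conj_eq_iff_im.mpr hjk
  set s : Finset ℝ := Finset.image ev Finset.univ with hs_def
  set P : Polynomial ℝ := Lagrange.interpolate s id chi with hP_def
  have hPeval : ∀ j, P.eval (ev j) = chi (ev j) := fun j =>
    Lagrange.eval_interpolate_at_node chi (Set.injOn_id _)
      (Finset.mem_image_of_mem ev (Finset.mem_univ j))
  set Pc : Polynomial ℂ := P.map (algebraMap ℝ ℂ) with hPc_def
  have hEeq : E = Matrix.diagonal (fun j => Polynomial.aeval ((ev j : ℝ) : ℂ) Pc) := by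
    rw [hE_def]
    refine congrArg Matrix.diagonal (funext fun j => ?_)
    rw [hPc_def, Polynomial.aeval_map_algebraMap,
      show ((ev j : ℝ) : ℂ) = algebraMap ℝ ℂ (ev j) from rfl,
      Polynomial.aeval_algebraMap_apply_eq_algebraMap_eval, hPeval j]
    rfl
  have hq_poly : q = Polynomial.aeval a Pc := by
    rw [hq_def, hspec, aeval_unitary_conj, hD_def, aeval_diagonal, ← hEeq]
  have hPc_conj : Pc.map (starRingEnd ℂ) = Pc := by
    rw [hPc_def, Polynomial.map_map]
    congr 1
    exact RingHom.ext fun x => (Complex.conj_ofReal x)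
  have hqmap : q.map (starRingEnd ℂ) = q := by
    have hhom := Polynomial.hom_eval₂ Pc (algebraMap ℂ (Matrix (Fin d) (Fin d) ℂ))
      ((starRingEnd ℂ).mapMatrix) a
    have hcomp : ((starRingEnd ℂ).mapMatrix).comp
        (algebraMap ℂ (Matrix (Fin d) (Fin d) ℂ))
        = (algebraMap ℂ (Matrix (Fin d) (Fin d) ℂ)).comp (starRingEnd ℂ) := by
      refine RingHom.ext fun c => ?_
      ext j k
      simp only [RingHom.coe_comp, Function.comp_apply, RingHom.mapMatrix_apply,
        Matrix.map_apply, Matrix.algebraMap_matrix_apply]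
      split_ifs <;> simp
    have hmapa : ((starRingEnd ℂ).mapMatrix) a = a := hamap
    calc q.map (starRingEnd ℂ)
        = ((starRingEnd ℂ).mapMatrix) (Polynomial.eval₂
            (algebraMap ℂ (Matrix (Fin d) (Fin d) ℂ)) a Pc) := by
          rw [← Polynomial.aeval_def, ← hq_poly]; rfl
      _ = Polynomial.eval₂ (((starRingEnd ℂ).mapMatrix).comp
            (algebraMap ℂ (Matrix (Fin d) (Fin d) ℂ)))
            (((starRingEnd ℂ).mapMatrix) a) Pc := hhom
      _ = Polynomial.eval₂ ((algebraMap ℂ (Matrix (Fin d) (Fin d) ℂ)).comp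
            (starRingEnd ℂ)) a Pc := by rw [hcomp, hmapa]
      _ = Polynomial.eval₂ (algebraMap ℂ (Matrix (Fin d) (Fin d) ℂ)) a
            (Pc.map (starRingEnd ℂ)) := (Polynomial.eval₂_map _ _ _).symm
      _ = Polynomial.aeval a Pc := by rw [hPc_conj, Polynomial.aeval_def]
      _ = q := hq_poly.symm
  intro j k
  have hentry : (starRingEnd ℂ) (q j k) = q j k := by
    have := congrArg (fun m : Matrix (Fin d) (Fin d) ℂ => m j k) hqmap
    simpa [Matrix.map_apply] using this
  exact Complex.conj_eq_iff_im.mp hentry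

end Proj

/-- If `p_i ∈ M_{d_i}(ℂ)` satisfy `‖p_i² − p_i‖₂ → 0`, `‖p_i* − p_i‖₂ → 0` and
`sup_i ‖p_i‖_∞ < ∞`, then there are orthogonal projections `q_i` with `‖p_i − q_i‖₂ → 0`;
moreover, if each `p_i` has real entries then the `q_i` may be chosen with real entries. -/
theorem exists_projections_close {d : ℕ → ℕ}
    (p : ∀ i : ℕ, Matrix (Fin (d i)) (Fin (d i)) ℂ)
    (h1 : Tendsto (fun i => matNorm2 (p i * p i - p i)) atTop (𝓝 0))
    (h2 : Tendsto (fun i => matNorm2 ((p i)ᴴ - p i)) atTop (𝓝 0))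
    (h3 : ∃ C : ℝ, ∀ i, matOpNorm (p i) ≤ C) :
    (∃ q : ∀ i : ℕ, Matrix (Fin (d i)) (Fin (d i)) ℂ,
      (∀ i, (q i)ᴴ = q i ∧ q i * q i = q i) ∧
      Tendsto (fun i => matNorm2 (p i - q i)) atTop (𝓝 0)) ∧
    ((∀ i j k, (p i j k).im = 0) →
      ∃ q : ∀ i : ℕ, Matrix (Fin (d i)) (Fin (d i)) ℂ,
        (∀ i, (q i)ᴴ = q i ∧ q i * q i = q i ∧ ∀ j k, (q i j k).im = 0) ∧
        Tendsto (fun i => matNorm2 (p i - q i)) atTop (𝓝 0)) := by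
  obtain ⟨C, hC⟩ := h3
  have hkey := fun i => Proj.key (p i)
  choose q hherm hidem hreal hb using hkey
  have hconv : Tendsto (fun i => matNorm2 (p i - q i)) atTop (𝓝 0) := by
    have hub : ∀ i, matNorm2 (p i - q i)
        ≤ 2 * matNorm2 (p i * p i - p i) + (3 / 2 + 2 * C) * matNorm2 ((p i)ᴴ - p i) := by
      intro i
      refine (hb i).trans ?_
      have hCi := hC i
      have hnn := Proj.matNorm2_nonneg ((p i)ᴴ - p i)
      nlinarith
    have hlim : Tendsto (fun i => 2 * matNorm2 (p i * p i - p i)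
        + (3 / 2 + 2 * C) * matNorm2 ((p i)ᴴ - p i)) atTop (𝓝 0) := by
      have := (h1.const_mul 2).add (h2.const_mul (3 / 2 + 2 * C))
      simpa using this
    exact squeeze_zero (fun i => Proj.matNorm2_nonneg _) hub hlim
  constructor
  · exact ⟨q, fun i => ⟨hherm i, hidem i⟩, hconv⟩
  · intro hre
    exact ⟨q, fun i => ⟨hherm i, hidem i, hreal i (hre i)⟩, hconv⟩
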